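/- ACC_ℕ and SEQACC_ℕ are strongly continuously Weihrauch equivalent: ACC_ℕ ≤_sW* SEQACC_ℕ and SEQACC_ℕ ≤_sW* ACC_ℕ. -/

import Mathlib

/-- The domain of a first-order problem. -/
def domFO (f : (ℕ → ℕ) → Set ℕ) : Set (ℕ → ℕ) := {p | f p ≠ ∅}

/-- The problem `ACC_ℕ`. -/
def ACCN (p : ℕ → ℕ) : Set ℕ :=
  {n | (∀ i j, p i ≠ 0 → p j ≠ 0 → p i = p j) ∧ ∀ k, p k ≠ n + 1}

/-- The problem `SEQACC_ℕ`: inputs are 0-1-sequences; if the first `1` occurs at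
position `s = Nat.pair n m`, any answer different from `n` is valid. -/
def SEQACCN (p : ℕ → ℕ) : Set ℕ :=
  {k | (∀ i, p i ≤ 1) ∧
    ∀ s, p s = 1 → (∀ t < s, p t = 0) → k ≠ (Nat.unpair s).1}

/-- Strong continuous Weihrauch reducibility between first-order problems. -/
def sRedFO (f g : (ℕ → ℕ) → Set ℕ) : Prop :=
  ∃ (H : (ℕ → ℕ) → (ℕ → ℕ)) (K : ℕ → ℕ),
    ContinuousOn H (domFO f) ∧
    ∀ p ∈ domFO f, H p ∈ domFO g ∧ ∀ n ∈ g (H p), K n ∈ f p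

lemma nhds_nat_eq_pure (m : ℕ) : nhds m = pure m := by
  rw [nhds_discrete]

lemma cont_of_dep (t : ℕ) (F : (ℕ → ℕ) → ℕ)
    (hF : ∀ p q : ℕ → ℕ, (∀ j ≤ t, q j = p j) → F q = F p) : Continuous F := by
  rw [continuous_iff_continuousAt]
  intro p
  have hj : ∀ j : ℕ, ∀ᶠ q in nhds p, q j = p j := by
    intro j
    have h := (continuous_apply j (A := fun _ : ℕ => ℕ)).continuousAt (x := p)
    rw [ContinuousAt, nhds_nat_eq_pure, Filter.tendsto_pure] at h
    exact h
  have hev : ∀ t' : ℕ, ∀ᶠ q in nhds p, ∀ j ≤ t', q j = p j := by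
    intro t'
    induction t' with
    | zero =>
      filter_upwards [hj 0] with q h j hjle
      have : j = 0 := Nat.le_zero.mp hjle
      rw [this]; exact h
    | succ n ih =>
      filter_upwards [ih, hj (n + 1)] with q h1 h2 j hjle
      rcases Nat.eq_or_lt_of_le hjle with h' | h'
      · rw [h']; exact h2
      · exact h1 j (Nat.lt_succ_iff.mp h')
  rw [ContinuousAt, nhds_nat_eq_pure, Filter.tendsto_pure]
  filter_upwards [hev t] with q hq
  exact hF p q hq

lemma mem_SEQACCN {q : ℕ → ℕ} {k : ℕ} (h1 : ∀ i, q i ≤ 1)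
    (h2 : ∀ s, q s = 1 → (∀ t < s, q t = 0) → k ≠ (Nat.unpair s).1) :
    k ∈ SEQACCN q := ⟨h1, h2⟩

lemma mem_ACCN {q : ℕ → ℕ} {n : ℕ} (h1 : ∀ i j, q i ≠ 0 → q j ≠ 0 → q i = q j)
    (h2 : ∀ k, q k ≠ n + 1) : n ∈ ACCN q := ⟨h1, h2⟩

theorem accn_equiv_seqaccn : sRedFO ACCN SEQACCN ∧ sRedFO SEQACCN ACCN := by
  constructor
  · -- ACCN ≤ SEQACCN
    refine ⟨fun p s => if p (Nat.unpair s).2 = (Nat.unpair s).1 + 1 then 1 else 0, id, ?_, ?_⟩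
    · apply Continuous.continuousOn
      apply continuous_pi
      intro s
      exact Continuous.comp
        (continuous_of_discreteTopology
          (f := fun m : ℕ => if m = (Nat.unpair s).1 + 1 then 1 else 0))
        (continuous_apply (Nat.unpair s).2)
    · intro p hp
      obtain ⟨n₀, hn₀⟩ := Set.nonempty_iff_ne_empty.mpr hp
      obtain ⟨hD, -⟩ := hn₀
      set H : ℕ → ℕ := fun s => if p (Nat.unpair s).2 = (Nat.unpair s).1 + 1 then 1 else 0
        with hHdef
      have hA : ∀ s, H s = 1 → p (Nat.unpair s).2 = (Nat.unpair s).1 + 1 := by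
        intro s hs
        by_contra h
        simp only [hHdef, if_neg h] at hs
        omega
      have hle : ∀ i, H i ≤ 1 := by
        intro i
        simp only [hHdef]
        split <;> omega
      constructor
      · -- H p ∈ dom SEQACCN
        by_cases hz : ∃ m, p m ≠ 0
        · obtain ⟨m, hm⟩ := hz
          obtain ⟨n, hn⟩ : ∃ n, p m = n + 1 := ⟨p m - 1, by omega⟩
          have hmem : (n + 1) ∈ SEQACCN H := by
            refine mem_SEQACCN hle ?_
            intro s hs _ hcontra
            have h1 := hA s hs
            have h2 : p (Nat.unpair s).2 = p m := hD _ _ (by omega) (by omega)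
            omega
          exact Set.nonempty_iff_ne_empty.mp ⟨_, hmem⟩
        · push_neg at hz
          have hmem : (0 : ℕ) ∈ SEQACCN H := by
            refine mem_SEQACCN hle ?_
            intro s hs
            exfalso
            have := hA s hs
            have := hz (Nat.unpair s).2
            omega
          exact Set.nonempty_iff_ne_empty.mp ⟨_, hmem⟩
      · -- correctness
        intro n hn
        have hn' : n ∈ SEQACCN H := hn
        obtain ⟨-, hcond⟩ := hn'
        simp only [id_eq]
        refine mem_ACCN hD ?_
        intro m hm
        have hex : ∃ s, H s = 1 := by
          refine ⟨Nat.pair n m, ?_⟩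
          simp only [hHdef, Nat.unpair_pair]
          rw [if_pos hm]
        have hspec : H (Nat.find hex) = 1 := Nat.find_spec hex
        have hmin : ∀ t < Nat.find hex, H t = 0 := by
          intro t ht
          have := Nat.find_min hex ht
          have := hle t
          omega
        have hne := hcond (Nat.find hex) hspec hmin
        have h1 := hA (Nat.find hex) hspec
        have h2 : p (Nat.unpair (Nat.find hex)).2 = p m := hD _ _ (by omega) (by omega)
        omega
  · -- SEQACCN ≤ ACCN
    refine ⟨fun p t => if p t = 1 ∧ ∀ j < t, p j = 0 then (Nat.unpair t).1 + 1 else 0,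
      id, ?_, ?_⟩
    · apply Continuous.continuousOn
      apply continuous_pi
      intro t
      apply cont_of_dep t
      intro p q h
      have hiff : (q t = 1 ∧ ∀ j < t, q j = 0) ↔ (p t = 1 ∧ ∀ j < t, p j = 0) := by
        constructor
        · rintro ⟨a, b⟩
          exact ⟨(h t le_rfl) ▸ a, fun j hj => (h j hj.le) ▸ b j hj⟩
        · rintro ⟨a, b⟩
          refine ⟨?_, fun j hj => ?_⟩
          · rw [h t le_rfl]; exact a
          · rw [h j hj.le]; exact b j hj
      exact if_congr hiff rfl rfl
    · intro p hp
      obtain ⟨k₀, hk₀⟩ := Set.nonempty_iff_ne_empty.mpr hp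
      obtain ⟨hle, -⟩ := hk₀
      set H : ℕ → ℕ := fun t => if p t = 1 ∧ ∀ j < t, p j = 0 then (Nat.unpair t).1 + 1 else 0
        with hHdef
      have hA : ∀ t, H t ≠ 0 → (p t = 1 ∧ ∀ j < t, p j = 0) ∧ H t = (Nat.unpair t).1 + 1 := by
        intro t ht
        by_cases h : p t = 1 ∧ ∀ j < t, p j = 0
        · exact ⟨h, by simp only [hHdef, if_pos h]⟩
        · exfalso
          simp only [hHdef, if_neg h] at ht
          exact ht rfl
      have huniq : ∀ i j, H i ≠ 0 → H j ≠ 0 → i = j := by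
        intro i j hi hj
        obtain ⟨⟨hpi, hbi⟩, -⟩ := hA i hi
        obtain ⟨⟨hpj, hbj⟩, -⟩ := hA j hj
        rcases lt_trichotomy i j with h | h | h
        · have := hbj i h; omega
        · exact h
        · have := hbi j h; omega
      have hD : ∀ i j, H i ≠ 0 → H j ≠ 0 → H i = H j := by
        intro i j hi hj
        rw [huniq i j hi hj]
      constructor
      · -- H p ∈ dom ACCN
        by_cases hz : ∃ t, H t ≠ 0
        · obtain ⟨t₀, ht₀⟩ := hz
          have hmem : H t₀ ∈ ACCN H := by
            refine mem_ACCN hD ?_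
            intro k hk
            have hk' : H k ≠ 0 := by omega
            have := huniq k t₀ hk' ht₀
            rw [this] at hk
            omega
          exact Set.nonempty_iff_ne_empty.mp ⟨_, hmem⟩
        · push_neg at hz
          have hmem : (0 : ℕ) ∈ ACCN H := by
            refine mem_ACCN hD ?_
            intro k
            rw [hz k]
            omega
          exact Set.nonempty_iff_ne_empty.mp ⟨_, hmem⟩
      · -- correctness
        intro n hn
        have hn' : n ∈ ACCN H := hn
        obtain ⟨-, hforb⟩ := hn'
        simp only [id_eq]
        refine mem_SEQACCN hle ?_
        intro s hs hprev hcontra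
        have hHs : H s = (Nat.unpair s).1 + 1 := by
          simp only [hHdef]
          exact if_pos ⟨hs, hprev⟩
        have := hforb s
        rw [hHs, ← hcontra] at this
        exact this rfl
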